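/- Let q(k) denote the number of tuples (e_3, …, e_k) of nonnegative integers with ∑_{j=3}^k e_j 2^j = 2^k. Then q(k) ≡ 2 (mod 8) if k is even and q(k) ≡ 4 (mod 8) if k is odd, for all k ≥ 5. -/

import Mathlib

def gAux : ℕ → ℕ → ℕ
  | 0, _ => 1
  | (k+1), n => ∑ t ∈ Finset.range (n/2 + 1), gAux k t

def bAux (n : ℕ) : ℕ := gAux n n

lemma gAux_succ (k n : ℕ) : gAux (k+1) n = ∑ t ∈ Finset.range (n/2 + 1), gAux k t := rfl

lemma gAux_stab : ∀ k n, n ≤ 2^k → gAux (k+1) n = gAux k n := by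
  intro k
  induction k with
  | zero =>
    intro n hn
    interval_cases n <;> rfl
  | succ k ih =>
    intro n hn
    rw [gAux_succ, gAux_succ]
    refine Finset.sum_congr rfl fun t ht => ih t ?_
    simp only [Finset.mem_range] at ht
    have : t ≤ n / 2 := by omega
    have h2 : n / 2 ≤ 2 ^ k := by
      have := Nat.pow_succ 2 k
      omega
    omega

lemma gAux_add : ∀ j k n, n ≤ 2^k → gAux (k + j) n = gAux k n := by
  intro j
  induction j with
  | zero => intro k n _; rfl
  | succ j ih =>
    intro k n hn
    have h1 : n ≤ 2 ^ (k + j) := le_trans hn (Nat.pow_le_pow_right (by norm_num) (by omega))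
    rw [show k + (j+1) = (k+j) + 1 by omega, gAux_stab _ _ h1, ih k n hn]

lemma gAux_eq_bAux (k n : ℕ) (hn : n ≤ 2^k) : gAux k n = bAux n := by
  have h1 : gAux (k + (max k n - k)) n = gAux k n := gAux_add _ _ _ hn
  have h2 : gAux (n + (max k n - n)) n = gAux n n := gAux_add _ _ _ (Nat.le_of_lt (Nat.lt_two_pow_self (n := n)))
  rw [show k + (max k n - k) = max k n by omega] at h1
  rw [show n + (max k n - n) = max k n by omega] at h2
  rw [bAux, ← h2, ← h1]

lemma bAux_sum (n : ℕ) : bAux n = ∑ t ∈ Finset.range (n/2 + 1), bAux t := by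
  cases n with
  | zero => rfl
  | succ n =>
    rw [bAux, gAux_succ]
    refine Finset.sum_congr rfl fun t ht => ?_
    simp only [Finset.mem_range] at ht
    refine gAux_eq_bAux _ _ ?_
    have : n + 1 ≤ 2 ^ n * 2 := by
      have := Nat.lt_two_pow_self (n := n); omega
    omega

lemma bAux_odd (m : ℕ) : bAux (2*m+1) = bAux (2*m) := by
  rw [bAux_sum (2*m+1), bAux_sum (2*m), show (2*m+1)/2 = m by omega,
    show (2*m)/2 = m by omega]

lemma bAux_even (m : ℕ) : bAux (2*m+2) = bAux (2*m) + bAux (m+1) := by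
  rw [bAux_sum (2*m+2), bAux_sum (2*m)]
  rw [show (2*m+2)/2 = m + 1 by omega, show (2*m)/2 = m by omega]
  rw [Finset.sum_range_succ]

lemma bAux_two_dvd : ∀ n, 2 ∣ bAux (n+2) := by
  intro n
  induction n using Nat.strong_induction_on with
  | _ n ih =>
    rcases Nat.even_or_odd n with ⟨m, hm⟩ | ⟨m, hm⟩
    · subst hm
      rw [show m + m + 2 = 2*m + 2 by ring, bAux_even]
      match m with
      | 0 => decide
      | (m+1) =>
        have h1 : 2 ∣ bAux (2*(m+1)) := by
          simpa [show 2*(m+1) = 2*m+2 by ring] using ih (2*m) (by omega)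
        have h2 : 2 ∣ bAux (m+1+1) := by
          simpa using ih m (by omega)
        exact Nat.dvd_add h1 h2
    · subst hm
      rw [show 2*m + 1 + 2 = 2*(m+1) + 1 by ring, bAux_odd]
      match m with
      | 0 => decide
      | (m+1) =>
        simpa [show 2*(m+1+1) = 2*m+2+2 by ring] using ih (2*m+2) (by omega)
lemma bAux_key (m : ℕ) :
    bAux (8*m+8) + bAux (2*m) = bAux (8*m) + bAux (2*m+2) + 4*(bAux (4*m) + bAux (2*m)) := by
  have e1 : bAux (8*m+8) = bAux (8*m+6) + bAux (4*m+4) := by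
    simpa [show 2*(4*m+3)+2 = 8*m+8 by ring, show 2*(4*m+3) = 8*m+6 by ring,
      show 4*m+3+1 = 4*m+4 by ring] using bAux_even (4*m+3)
  have e2 : bAux (8*m+6) = bAux (8*m+4) + bAux (4*m+3) := by
    simpa [show 2*(4*m+2)+2 = 8*m+6 by ring, show 2*(4*m+2) = 8*m+4 by ring,
      show 4*m+2+1 = 4*m+3 by ring] using bAux_even (4*m+2)
  have e3 : bAux (8*m+4) = bAux (8*m+2) + bAux (4*m+2) := by
    simpa [show 2*(4*m+1)+2 = 8*m+4 by ring, show 2*(4*m+1) = 8*m+2 by ring,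
      show 4*m+1+1 = 4*m+2 by ring] using bAux_even (4*m+1)
  have e4 : bAux (8*m+2) = bAux (8*m) + bAux (4*m+1) := by
    simpa [show 2*(4*m)+2 = 8*m+2 by ring, show 2*(4*m) = 8*m by ring] using bAux_even (4*m)
  have e5 : bAux (4*m+4) = bAux (4*m+2) + bAux (2*m+2) := by
    simpa [show 2*(2*m+1)+2 = 4*m+4 by ring, show 2*(2*m+1) = 4*m+2 by ring,
      show 2*m+1+1 = 2*m+2 by ring] using bAux_even (2*m+1)
  have e6 : bAux (4*m+2) = bAux (4*m) + bAux (2*m+1) := by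
    simpa [show 2*(2*m)+2 = 4*m+2 by ring, show 2*(2*m) = 4*m by ring] using bAux_even (2*m)
  have e7 : bAux (4*m+3) = bAux (4*m+2) := by
    simpa [show 2*(2*m+1)+1 = 4*m+3 by ring, show 2*(2*m+1) = 4*m+2 by ring] using bAux_odd (2*m+1)
  have e8 : bAux (4*m+1) = bAux (4*m) := by
    simpa [show 2*(2*m)+1 = 4*m+1 by ring, show 2*(2*m) = 4*m by ring] using bAux_odd (2*m)
  have e9 : bAux (2*m+1) = bAux (2*m) := bAux_odd m
  omega

lemma bAux_8m (m : ℕ) : bAux (8*m) % 8 = bAux (2*m) % 8 := by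
  induction m with
  | zero => rfl
  | succ m ih =>
    have hkey := bAux_key m
    have hdvd : 2 ∣ bAux (4*m) + bAux (2*m) := by
      clear hkey ih; match m with
      | 0 => decide
      | (m+1) =>
        have h1 : 2 ∣ bAux (4*(m+1)) := by
          simpa [show 4*(m+1) = 4*m+2+2 by ring] using bAux_two_dvd (4*m+2)
        have h2 : 2 ∣ bAux (2*(m+1)) := by
          simpa [show 2*(m+1) = 2*m+2 by ring] using bAux_two_dvd (2*m)
        exact Nat.dvd_add h1 h2
    obtain ⟨c, hc⟩ := hdvd
    rw [hc] at hkey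
    have h8 : (bAux (8*m+8) + bAux (2*m)) % 8 = (bAux (8*m) + bAux (2*m+2)) % 8 := by
      omega
    have : (bAux (8*m+8) + bAux (2*m)) % 8 = (bAux (2*m) + bAux (2*m+2)) % 8 := by
      rw [h8]; omega
    rw [show 8*(m+1) = 8*m+8 by ring, show 2*(m+1) = 2*m+2 by ring]
    omega

lemma bAux_pow_step (m : ℕ) (hm : 1 ≤ m) : bAux (2^(m+2)) % 8 = bAux (2^m) % 8 := by
  obtain ⟨m, rfl⟩ := Nat.exists_eq_add_of_le hm
  have h1 : 2^(1+m+2) = 8 * 2^m := by ring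
  have h2 : 2^(1+m) = 2 * 2^m := by ring
  rw [h1, h2]
  exact bAux_8m (2^m)

lemma bAux_pow (m : ℕ) (hm : 2 ≤ m) :
    bAux (2^m) % 8 = if m % 2 = 0 then 4 else 2 := by
  induction m using Nat.strong_induction_on with
  | _ m ih =>
    match m, hm with
    | 2, _ => decide
    | 3, _ => decide
    | (m+4), _ =>
      rw [show m+4 = (m+2)+2 by ring, bAux_pow_step (m+2) (by omega),
        ih (m+2) (by omega) (by omega)]
      have : (m+2+2) % 2 = (m+2) % 2 := by omega
      rw [this]
abbrev TupSet (k n : ℕ) : Type :=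
  {e : ℕ → ℕ // (∀ j, j ∉ Finset.range (k+1) → e j = 0) ∧
    ∑ j ∈ Finset.range (k+1), e j * 2 ^ j = n}

def tupZero (n : ℕ) : TupSet 0 n :=
  ⟨fun j => if j = 0 then n else 0, by
    constructor
    · intro j hj
      simp only [Finset.mem_range] at hj
      simp [show j ≠ 0 by omega]
    · simp⟩

instance TupSet_unique (n : ℕ) : Unique (TupSet 0 n) where
  default := tupZero n
  uniq := by
    rintro ⟨e, he, hs⟩
    have hs' : e 0 = n := by simpa using hs
    apply Subtype.ext
    funext j
    rcases Nat.eq_zero_or_pos j with rfl | hj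
    · simpa [tupZero] using hs'
    · show e j = if j = 0 then n else 0
      rw [he j (by simp only [Finset.mem_range]; omega)]
      simp [show j ≠ 0 by omega]

def tupEquiv (k n : ℕ) : TupSet (k+1) n ≃ Σ t : Fin (n/2 + 1), TupSet k t.1 where
  toFun e := by
    refine ⟨⟨∑ j ∈ Finset.range (k+1), e.1 (j+1) * 2 ^ j, ?_⟩,
      ⟨fun j => e.1 (j+1), ?_, rfl⟩⟩
    · obtain ⟨e, he, hs⟩ := e
      have hpeel : ∑ j ∈ Finset.range (k+1+1), e j * 2 ^ j
          = (∑ j ∈ Finset.range (k+1), e (j+1) * 2 ^ (j+1)) + e 0 * 2 ^ 0 :=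
        Finset.sum_range_succ' _ _
      have h2 : ∑ j ∈ Finset.range (k+1), e (j+1) * 2 ^ (j+1)
          = 2 * ∑ j ∈ Finset.range (k+1), e (j+1) * 2 ^ j := by
        rw [Finset.mul_sum]
        refine Finset.sum_congr rfl fun j _ => by ring
      simp only [Finset.mem_range]
      omega
    · intro j hj
      refine e.2.1 (j+1) ?_
      simp only [Finset.mem_range] at hj ⊢
      omega
  invFun p := by
    obtain ⟨t, f, hf, hs⟩ := p
    refine ⟨fun j => if j = 0 then n - 2 * t.1 else f (j-1), ?_, ?_⟩
    · intro j hj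
      simp only [Finset.mem_range] at hj
      show (if j = 0 then n - 2 * t.1 else f (j-1)) = 0
      rw [if_neg (by omega)]
      exact hf (j-1) (by simp only [Finset.mem_range]; omega)
    · have hpeel : ∑ j ∈ Finset.range (k+1+1),
          (if j = 0 then n - 2 * t.1 else f (j-1)) * 2 ^ j
          = (∑ j ∈ Finset.range (k+1),
              (if j+1 = 0 then n - 2 * t.1 else f (j+1-1)) * 2 ^ (j+1))
            + (n - 2 * t.1) * 2 ^ 0 :=
        Finset.sum_range_succ' _ _
      rw [hpeel]
      have h2 : ∑ j ∈ Finset.range (k+1),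
          (if j+1 = 0 then n - 2 * t.1 else f (j+1-1)) * 2 ^ (j+1)
          = 2 * ∑ j ∈ Finset.range (k+1), f j * 2 ^ j := by
        rw [Finset.mul_sum]
        refine Finset.sum_congr rfl fun j _ => by
          rw [if_neg (by omega)]
          simp only [Nat.add_sub_cancel]
          ring
      rw [h2, hs]
      have ht := t.2
      simp only [Nat.lt_succ_iff] at ht
      have : 2 * t.1 ≤ n := by omega
      simp only [pow_zero, mul_one]
      omega
  left_inv := by
    rintro ⟨e, he, hs⟩
    apply Subtype.ext
    funext j
    simp only
    rcases Nat.eq_zero_or_pos j with rfl | hj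
    · rw [if_pos rfl]
      have hpeel : ∑ j ∈ Finset.range (k+1+1), e j * 2 ^ j
          = (∑ j ∈ Finset.range (k+1), e (j+1) * 2 ^ (j+1)) + e 0 * 2 ^ 0 :=
        Finset.sum_range_succ' _ _
      have h2 : ∑ j ∈ Finset.range (k+1), e (j+1) * 2 ^ (j+1)
          = 2 * ∑ j ∈ Finset.range (k+1), e (j+1) * 2 ^ j := by
        rw [Finset.mul_sum]
        refine Finset.sum_congr rfl fun j _ => by ring
      omega
    · rw [if_neg (by omega)]
      congr 1
      omega
  right_inv := by
    rintro ⟨t, f, hf, hs⟩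
    refine Sigma.subtype_ext ?_ ?_
    · apply Fin.ext
      show (∑ j ∈ Finset.range (k+1),
        (if j + 1 = 0 then n - 2 * t.1 else f (j+1-1)) * 2 ^ j) = t.1
      rw [← hs]
      refine Finset.sum_congr rfl fun j _ => by rw [if_neg (by omega)]; simp
    · funext j
      show (if j + 1 = 0 then n - 2 * t.1 else f (j+1-1)) = f j
      rw [if_neg (by omega)]
      simp
lemma tup_finite : ∀ k n, Finite (TupSet k n) := by
  intro k
  induction k with
  | zero => intro n; infer_instance
  | succ k ih =>
    intro n
    haveI : ∀ t : Fin (n/2+1), Finite (TupSet k t.1) := fun t => ih t.1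
    exact Finite.of_equiv _ (tupEquiv k n).symm

lemma card_sigma_fin {N : ℕ} (β : Fin N → Type) [∀ t, Finite (β t)] :
    Nat.card (Σ t, β t) = ∑ t, Nat.card (β t) := by
  haveI : ∀ t, Fintype (β t) := fun t => Fintype.ofFinite _
  simp [Nat.card_eq_fintype_card, Fintype.card_sigma]

lemma tup_card : ∀ k n, Nat.card (TupSet k n) = gAux k n := by
  intro k
  induction k with
  | zero => intro n; rw [Nat.card_unique]; rfl
  | succ k ih =>
    intro n
    haveI : ∀ t : Fin (n/2+1), Finite (TupSet k t.1) := fun t => tup_finite k t.1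
    rw [Nat.card_congr (tupEquiv k n), card_sigma_fin, gAux_succ,
      Fin.sum_univ_eq_sum_range (fun i => Nat.card (TupSet k i))]
    exact Finset.sum_congr rfl fun t _ => ih t

lemma shift_sum (k : ℕ) (hk : 3 ≤ k) (e : ℕ → ℕ) :
    ∑ j ∈ Finset.Icc 3 k, e j * 2 ^ j = 8 * ∑ j ∈ Finset.range (k-3+1), e (3+j) * 2 ^ j := by
  rw [show Finset.Icc 3 k = Finset.Ico 3 (k+1) by rw [Finset.Ico_add_one_right_eq_Icc]]
  rw [Finset.sum_Ico_eq_sum_range, show k+1-3 = k-3+1 by omega, Finset.mul_sum]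
  refine Finset.sum_congr rfl fun i _ => ?_
  rw [pow_add]
  ring

def shiftEquiv (k : ℕ) (hk : 3 ≤ k) :
    {e : ℕ → ℕ // (∀ j, j ∉ Finset.Icc 3 k → e j = 0) ∧
        ∑ j ∈ Finset.Icc 3 k, e j * 2 ^ j = 2 ^ k} ≃ TupSet (k-3) (2^(k-3)) where
  toFun e := by
    refine ⟨fun j => e.1 (3+j), ?_, ?_⟩
    · intro j hj
      simp only [Finset.mem_range] at hj
      exact e.2.1 (3+j) (by simp only [Finset.mem_Icc]; omega)
    · have h8 : (8:ℕ) * ∑ j ∈ Finset.range (k-3+1), e.1 (3+j) * 2 ^ j = 8 * 2^(k-3) := by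
        rw [← shift_sum k hk, e.2.2, show k = 3 + (k-3) by omega, pow_add]
        norm_num
      exact Nat.eq_of_mul_eq_mul_left (by norm_num) h8
  invFun f := by
    refine ⟨fun j => if 3 ≤ j then f.1 (j-3) else 0, ?_, ?_⟩
    · intro j hj
      simp only [Finset.mem_Icc, not_and_or] at hj
      show (if 3 ≤ j then f.1 (j-3) else 0) = 0
      rcases hj with h | h
      · rw [if_neg (by omega)]
      · rcases Nat.lt_or_ge j 3 with h3 | h3
        · rw [if_neg (by omega)]
        · rw [if_pos h3]
          exact f.2.1 (j-3) (by simp only [Finset.mem_range]; omega)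
    · rw [shift_sum k hk]
      have : ∀ j ∈ Finset.range (k-3+1),
          (if 3 ≤ 3+j then f.1 (3+j-3) else 0) * 2 ^ j = f.1 j * 2 ^ j := by
        intro j _
        rw [if_pos (by omega), show 3+j-3 = j by omega]
      rw [Finset.sum_congr rfl this, f.2.2, show k = 3 + (k-3) by omega, pow_add]
      norm_num
  left_inv := by
    rintro ⟨e, he, hs⟩
    apply Subtype.ext
    funext j
    show (if 3 ≤ j then e (3+(j-3)) else 0) = e j
    rcases Nat.lt_or_ge j 3 with h3 | h3
    · rw [if_neg (by omega), he j (by simp only [Finset.mem_Icc]; omega)]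
    · rw [if_pos h3, show 3+(j-3) = j by omega]
  right_inv := by
    rintro ⟨f, hf, hs⟩
    apply Subtype.ext
    funext j
    show (if 3 ≤ 3+j then f (3+j-3) else 0) = f j
    rw [if_pos (by omega), show 3+j-3 = j by omega]

theorem card_tuples_mod_eight (k : ℕ) (hk : 5 ≤ k) :
    (Even k → Nat.card {e : ℕ → ℕ // (∀ j, j ∉ Finset.Icc 3 k → e j = 0) ∧
        ∑ j ∈ Finset.Icc 3 k, e j * 2 ^ j = 2 ^ k} % 8 = 2) ∧
    (Odd k → Nat.card {e : ℕ → ℕ // (∀ j, j ∉ Finset.Icc 3 k → e j = 0) ∧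
        ∑ j ∈ Finset.Icc 3 k, e j * 2 ^ j = 2 ^ k} % 8 = 4) := by
  have hcard : Nat.card {e : ℕ → ℕ // (∀ j, j ∉ Finset.Icc 3 k → e j = 0) ∧
      ∑ j ∈ Finset.Icc 3 k, e j * 2 ^ j = 2 ^ k} = bAux (2^(k-3)) := by
    have h1 := Nat.card_congr (shiftEquiv k (by omega))
    rw [h1, tup_card]
    exact gAux_eq_bAux _ _ (le_refl _)
  rw [hcard, bAux_pow (k-3) (by clear hcard; omega)]
  refine ⟨fun hke => ?_, fun hko => ?_⟩
  · rw [Nat.even_iff] at hke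
    rw [if_neg (by clear hcard; omega)]
  · rw [Nat.odd_iff] at hko
    rw [if_pos (by clear hcard; omega)]
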